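/- arXiv:2409.06546 — 5 statements merged into one kernel-verified Lean document; each statement's English description precedes it below -/
import Mathlib

section
/- For every natural number n ≥ 1, ζ(2n) = (1 / (n · (2 - 2^{2-2n}) · Γ(2n-1))) · ∫_{-∞}^{∞} t^{2n-2} · log(1 + e^t) / (1 + e^t) dt, where the integral converges. Equivalently, ∫_{-∞}^{∞} t^{2n-2} log(1+e^t)/(1+e^t) dt = n · (2 - 2^{2-2n}) · (2n-2)! · ζ(2n). -/
set_option maxHeartbeats 1000000

open Real MeasureTheory

namespace ZetaAux

open Set

lemma aux_integrable (a : ℕ) {r : ℝ} (hr : 0 < r) :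
    IntegrableOn (fun t : ℝ ↦ t ^ a * Real.exp (-(r * t))) (Ioi 0) := by
  have h := Real.GammaIntegral_convergent (s := (a : ℝ) + 1) (by positivity)
  rw [← mul_zero r, ← integrableOn_Ioi_comp_mul_left_iff _ _ hr] at h
  have h' := h.const_mul ((r : ℝ) ^ a)⁻¹
  refine IntegrableOn.congr_fun h' (fun t ht ↦ ?_) measurableSet_Ioi
  have e1 : ((a:ℝ) + 1 - 1) = ((a:ℕ):ℝ) := by push_cast; ring
  rw [e1, Real.rpow_natCast, mul_pow]
  have : (r : ℝ) ^ a ≠ 0 := pow_ne_zero _ hr.ne'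
  field_simp

lemma aux_integral (a : ℕ) {r : ℝ} (hr : 0 < r) :
    ∫ t in Ioi (0:ℝ), t ^ a * Real.exp (-(r * t)) = (a.factorial : ℝ) / r ^ (a + 1) := by
  have h := Real.integral_rpow_mul_exp_neg_mul_Ioi (a := (a:ℝ)+1) (by positivity) hr
  have e1 : ((a:ℝ) + 1 - 1) = ((a:ℕ):ℝ) := by push_cast; ring
  rw [e1] at h
  simp_rw [Real.rpow_natCast] at h
  rw [h, Real.Gamma_nat_eq_factorial]
  have e2 : ((a:ℝ) + 1) = (((a+1:ℕ)):ℝ) := by push_cast; ring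
  rw [e2, Real.rpow_natCast, div_pow, one_pow]
  ring

lemma summable_aux (p : ℕ) (hp : 1 < p) :
    Summable (fun k : ℕ ↦ 1 / ((k:ℝ)+1) ^ p) := by
  have h := (summable_nat_add_iff 1).2 (summable_one_div_nat_pow.2 hp)
  exact h.congr (fun k ↦ by push_cast; ring)

lemma key (a : ℕ) (c : ℕ → ℝ) (F : ℝ → ℝ)
    (hc : Summable (fun k : ℕ ↦ |c k| / ((k:ℝ)+1) ^ (a+1)))
    (hF : ∀ t ∈ Ioi (0:ℝ), HasSum (fun k : ℕ ↦ c k * Real.exp (-(((k:ℝ)+1) * t))) (F t)) :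
    HasSum (fun k : ℕ ↦ (a.factorial : ℝ) * c k / ((k:ℝ)+1) ^ (a+1))
      (∫ t in Ioi (0:ℝ), t ^ a * F t) := by
  have hint : ∀ k : ℕ,
      Integrable (fun t : ℝ ↦ t ^ a * (c k * Real.exp (-(((k:ℝ)+1) * t))))
        (volume.restrict (Ioi 0)) := by
    intro k
    have h := (aux_integrable a (r := (k:ℝ)+1) (by positivity)).const_mul (c k)
    exact IntegrableOn.congr_fun h (fun t ht ↦ by ring) measurableSet_Ioi
  have hnorm : ∀ k : ℕ,
      ∫ t in Ioi (0:ℝ), ‖t ^ a * (c k * Real.exp (-(((k:ℝ)+1) * t)))‖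
        = |c k| * ((a.factorial : ℝ) / ((k:ℝ)+1) ^ (a+1)) := by
    intro k
    rw [← aux_integral a (r := (k:ℝ)+1) (by positivity), ← integral_const_mul]
    refine setIntegral_congr_fun measurableSet_Ioi (fun t ht ↦ ?_)
    rw [Real.norm_eq_abs, abs_mul, abs_mul, abs_pow, Real.abs_exp,
      abs_of_pos (show (0:ℝ) < t from ht)]
    ring
  have hsum : Summable fun k : ℕ ↦
      ∫ t in Ioi (0:ℝ), ‖t ^ a * (c k * Real.exp (-(((k:ℝ)+1) * t)))‖ := by
    simp_rw [hnorm]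
    exact (hc.mul_left (a.factorial : ℝ)).congr (fun k ↦ by ring)
  have H := hasSum_integral_of_summable_integral_norm hint hsum
  have e1 : ∀ k : ℕ, (∫ t in Ioi (0:ℝ), t ^ a * (c k * Real.exp (-(((k:ℝ)+1) * t))))
      = (a.factorial : ℝ) * c k / ((k:ℝ)+1) ^ (a+1) := by
    intro k
    have h := aux_integral a (r := (k:ℝ)+1) (by positivity)
    calc (∫ t in Ioi (0:ℝ), t ^ a * (c k * Real.exp (-(((k:ℝ)+1) * t))))
        = c k * ∫ t in Ioi (0:ℝ), t ^ a * Real.exp (-(((k:ℝ)+1) * t)) := by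
          rw [← integral_const_mul]
          exact setIntegral_congr_fun measurableSet_Ioi (fun t ht ↦ by ring)
      _ = (a.factorial : ℝ) * c k / ((k:ℝ)+1) ^ (a+1) := by rw [h]; ring
  have e2 : (∫ t in Ioi (0:ℝ), ∑' k : ℕ, t ^ a * (c k * Real.exp (-(((k:ℝ)+1) * t))))
      = ∫ t in Ioi (0:ℝ), t ^ a * F t := by
    refine setIntegral_congr_fun measurableSet_Ioi (fun t ht ↦ ?_)
    rw [tsum_mul_left, ((hF t ht).tsum_eq)]
  simp_rw [e1] at H
  rwa [e2] at H

lemma hasSum_inv_exp_add {t : ℝ} (ht : 0 < t) :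
    HasSum (fun k : ℕ ↦ (-1:ℝ)^k * Real.exp (-(((k:ℝ)+1) * t))) (1 / (Real.exp t + 1)) := by
  have hx : |(-Real.exp (-t))| < 1 := by
    rw [abs_neg, Real.abs_exp]
    exact Real.exp_lt_one_iff.2 (by linarith)
  have h := (hasSum_geometric_of_abs_lt_one hx).mul_right (Real.exp (-t))
  have e1 : (fun k : ℕ ↦ (-Real.exp (-t))^k * Real.exp (-t))
      = fun k : ℕ ↦ (-1:ℝ)^k * Real.exp (-(((k:ℝ)+1) * t)) := by
    funext k
    rw [neg_pow, mul_assoc, ← Real.exp_nat_mul, ← Real.exp_add]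
    congr 2
    ring
  have e2 : (1 - -Real.exp (-t))⁻¹ * Real.exp (-t) = 1 / (Real.exp t + 1) := by
    rw [Real.exp_neg]
    have h0 : Real.exp t ≠ 0 := (Real.exp_pos t).ne'
    have h1 : Real.exp t + 1 ≠ 0 := by positivity
    rw [sub_neg_eq_add]
    field_simp
  rwa [e1, e2] at h

lemma hasSum_log_exp {t : ℝ} (ht : 0 < t) :
    HasSum (fun k : ℕ ↦ ((-1:ℝ)^k / ((k:ℝ)+1)) * Real.exp (-(((k:ℝ)+1) * t)))
      (Real.log (1 + Real.exp (-t))) := by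
  have hx : |(-Real.exp (-t))| < 1 := by
    rw [abs_neg, Real.abs_exp]
    exact Real.exp_lt_one_iff.2 (by linarith)
  have h := (Real.hasSum_pow_div_log_of_abs_lt_one hx).neg
  have e1 : (fun k : ℕ ↦ -((-Real.exp (-t)) ^ (k+1) / ((k:ℝ)+1)))
      = fun k : ℕ ↦ ((-1:ℝ)^k / ((k:ℝ)+1)) * Real.exp (-(((k:ℝ)+1) * t)) := by
    funext k
    rw [neg_pow, ← Real.exp_nat_mul,
      show ((k+1:ℕ):ℝ) * -t = -(((k:ℝ)+1) * t) by push_cast; ring, pow_succ]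
    ring
  have e2 : - -Real.log (1 - -Real.exp (-t)) = Real.log (1 + Real.exp (-t)) := by
    rw [neg_neg, sub_neg_eq_add]
  rwa [e1, e2] at h

end ZetaAux

open ZetaAux Set in
/-- For every natural number `n ≥ 1`,
`ζ(2n) = (1 / (n·(2 - 2^{2-2n})·Γ(2n-1))) · ∫_{-∞}^{∞} t^{2n-2}·log(1+e^t)/(1+e^t) dt`. -/
theorem zeta_even_eq_integral (n : ℕ) (hn : 1 ≤ n) :
    riemannZeta (2 * n) =
      ((1 / (n * (2 - (2 : ℝ) ^ ((2 : ℤ) - 2 * n)) * Real.Gamma (2 * n - 1)) *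
        ∫ t : ℝ, t ^ (2 * n - 2) * Real.log (1 + Real.exp t) / (1 + Real.exp t) : ℝ) : ℂ) := by
  obtain ⟨m, rfl⟩ : ∃ m, n = m + 1 := ⟨n - 1, by omega⟩
  have hexp2 : 2 * (m + 1) - 2 = 2 * m := by omega
  rw [hexp2]
  -- the series
  have hZsum : Summable (fun k : ℕ ↦ 1 / ((k:ℝ)+1) ^ (2*m+2)) := summable_aux _ (by omega)
  set Z : ℝ := ∑' k : ℕ, 1 / ((k:ℝ)+1) ^ (2*m+2) with hZdef
  have hZ : HasSum (fun k : ℕ ↦ 1 / ((k:ℝ)+1) ^ (2*m+2)) Z := hZsum.hasSum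
  set c : ℝ := ((2:ℝ) ^ (2*m+2))⁻¹ with hcdef
  have hodd : HasSum (fun k : ℕ ↦ 1 / (((2*k+1:ℕ):ℝ)+1) ^ (2*m+2)) (c * Z) := by
    have h := hZ.mul_left c
    have e : (fun k : ℕ ↦ c * (1 / ((k:ℝ)+1) ^ (2*m+2)))
        = fun k : ℕ ↦ 1 / (((2*k+1:ℕ):ℝ)+1) ^ (2*m+2) := by
      funext k
      have hk : ((2*k+1:ℕ):ℝ) + 1 = 2 * ((k:ℝ)+1) := by push_cast; ring
      rw [hk, mul_pow, hcdef]
      have h1 : ((k:ℝ)+1) ^ (2*m+2) ≠ 0 := by positivity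
      have h2 : (2:ℝ) ^ (2*m+2) ≠ 0 := by positivity
      field_simp
    rwa [e] at h
  have hevensum : Summable (fun k : ℕ ↦ 1 / (((2*k:ℕ):ℝ)+1) ^ (2*m+2)) := by
    have h := hZsum.comp_injective (i := fun k : ℕ ↦ 2 * k) (mul_right_injective₀ (two_ne_zero' ℕ))
    exact h.congr (fun k ↦ rfl)
  have heven : HasSum (fun k : ℕ ↦ 1 / (((2*k:ℕ):ℝ)+1) ^ (2*m+2)) (Z - c * Z) := by
    have h1 := hevensum.hasSum
    have h2 := (HasSum.even_add_odd (f := fun k : ℕ ↦ 1 / ((k:ℝ)+1) ^ (2*m+2)) h1 hodd).unique hZ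
    have : (∑' k : ℕ, 1 / (((2*k:ℕ):ℝ)+1) ^ (2*m+2)) = Z - c * Z := by linarith
    rwa [this] at h1
  have hE : HasSum (fun k : ℕ ↦ (-1:ℝ)^k / ((k:ℝ)+1)^(2*m+2)) ((1 - 2 * c) * Z) := by
    have he : HasSum (fun k : ℕ ↦ (-1:ℝ)^(2*k) / (((2*k:ℕ):ℝ)+1)^(2*m+2)) (Z - c * Z) := by
      have e : (fun k : ℕ ↦ (-1:ℝ)^(2*k) / (((2*k:ℕ):ℝ)+1)^(2*m+2))
          = fun k : ℕ ↦ 1 / (((2*k:ℕ):ℝ)+1) ^ (2*m+2) := by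
        funext k
        rw [pow_mul]
        norm_num
      rw [e]; exact heven
    have ho : HasSum (fun k : ℕ ↦ (-1:ℝ)^(2*k+1) / (((2*k+1:ℕ):ℝ)+1)^(2*m+2)) (-(c * Z)) := by
      have e : (fun k : ℕ ↦ (-1:ℝ)^(2*k+1) / (((2*k+1:ℕ):ℝ)+1)^(2*m+2))
          = fun k : ℕ ↦ -(1 / (((2*k+1:ℕ):ℝ)+1) ^ (2*m+2)) := by
        funext k
        rw [pow_succ, pow_mul]
        norm_num
        rw [neg_div, one_div]
      rw [e]; exact hodd.neg
    have h := HasSum.even_add_odd (f := fun k : ℕ ↦ (-1:ℝ)^k / ((k:ℝ)+1)^(2*m+2)) he ho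
    have e2 : Z - c * Z + -(c * Z) = (1 - 2 * c) * Z := by ring
    rwa [e2] at h
  -- the two half-line integrals
  have hI1 : HasSum (fun k : ℕ ↦ ((2*m+1).factorial : ℝ) * (-1)^k / ((k:ℝ)+1)^(2*m+2))
      (∫ t in Ioi (0:ℝ), t^(2*m+1) * (1 / (Real.exp t + 1))) := by
    have hsum' : Summable (fun k : ℕ ↦ |(-1:ℝ)^k| / ((k:ℝ)+1) ^ (2*m+1+1)) := by
      refine (summable_aux (2*m+1+1) (by omega)).congr (fun k ↦ ?_)
      rw [abs_pow, abs_neg, abs_one, one_pow]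
    have h := key (2*m+1) (fun k ↦ (-1:ℝ)^k) (fun t ↦ 1 / (Real.exp t + 1))
      hsum' (fun t ht ↦ hasSum_inv_exp_add ht)
    have e : 2*m+1+1 = 2*m+2 := by ring
    rwa [e] at h
  have hI2 : HasSum (fun k : ℕ ↦ ((2*m).factorial : ℝ) * (-1)^k / ((k:ℝ)+1)^(2*m+2))
      (∫ t in Ioi (0:ℝ), t^(2*m) * Real.log (1 + Real.exp (-t))) := by
    have hsum' : Summable (fun k : ℕ ↦ |(-1:ℝ)^k / ((k:ℝ)+1)| / ((k:ℝ)+1) ^ (2*m+1)) := by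
      refine (summable_aux (2*m+2) (by omega)).congr (fun k ↦ ?_)
      rw [abs_div, abs_pow, abs_neg, abs_one, one_pow, abs_of_pos (by positivity),
        show 2*m+2 = (2*m+1)+1 from rfl, pow_succ]
      rw [div_div]
      ring_nf
    have h := key (2*m) (fun k ↦ (-1:ℝ)^k / ((k:ℝ)+1))
      (fun t ↦ Real.log (1 + Real.exp (-t))) hsum' (fun t ht ↦ hasSum_log_exp ht)
    have e : (fun k : ℕ ↦ ((2*m).factorial : ℝ) * ((-1:ℝ)^k / ((k:ℝ)+1)) / ((k:ℝ)+1) ^ (2*m+1))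
        = fun k : ℕ ↦ ((2*m).factorial : ℝ) * (-1)^k / ((k:ℝ)+1)^(2*m+2) := by
      funext k
      have h1 : ((k:ℝ)+1) ≠ 0 := by positivity
      rw [show 2*m+2 = (2*m+1)+1 from rfl, pow_succ]
      field_simp
      ring
    rwa [e] at h
  have hIval1 : (∫ t in Ioi (0:ℝ), t^(2*m+1) * (1 / (Real.exp t + 1)))
      = ((2*m+1).factorial : ℝ) * ((1 - 2 * c) * Z) := by
    refine hI1.unique ?_
    have h := hE.mul_left ((2*m+1).factorial : ℝ)
    have e : (fun k : ℕ ↦ ((2*m+1).factorial : ℝ) * ((-1:ℝ)^k / ((k:ℝ)+1)^(2*m+2)))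
        = fun k : ℕ ↦ ((2*m+1).factorial : ℝ) * (-1)^k / ((k:ℝ)+1)^(2*m+2) := by
      funext k; rw [mul_div_assoc]
    rwa [e] at h
  have hIval2 : (∫ t in Ioi (0:ℝ), t^(2*m) * Real.log (1 + Real.exp (-t)))
      = ((2*m).factorial : ℝ) * ((1 - 2 * c) * Z) := by
    refine hI2.unique ?_
    have h := hE.mul_left ((2*m).factorial : ℝ)
    have e : (fun k : ℕ ↦ ((2*m).factorial : ℝ) * ((-1:ℝ)^k / ((k:ℝ)+1)^(2*m+2)))
        = fun k : ℕ ↦ ((2*m).factorial : ℝ) * (-1)^k / ((k:ℝ)+1)^(2*m+2) := by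
      funext k; rw [mul_div_assoc]
    rwa [e] at h
  -- integrability
  set f : ℝ → ℝ := fun t ↦ t ^ (2*m) * Real.log (1 + Real.exp t) / (1 + Real.exp t) with hfdef
  have hfc : Continuous f := by
    apply Continuous.div
    · exact (continuous_pow _).mul
        ((continuous_const.add Real.continuous_exp).log (fun t ↦ (by positivity : (0:ℝ) < 1 + Real.exp t).ne'))
    · exact continuous_const.add Real.continuous_exp
    · intro t; positivity
  have hbound_pos : ∀ t ∈ Ioi (0:ℝ), ‖f t‖ ≤
      t^(2*m+1) * Real.exp (-(1*t)) + Real.log 2 * (t^(2*m) * Real.exp (-(1*t))) := by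
    intro t ht
    have ht' : (0:ℝ) < t := ht
    have het : (0:ℝ) < Real.exp t := Real.exp_pos t
    have hd : (0:ℝ) < 1 + Real.exp t := by positivity
    have hlog0 : 0 ≤ Real.log (1 + Real.exp t) := Real.log_nonneg (by linarith)
    have hf0 : 0 ≤ f t := by
      apply div_nonneg _ hd.le
      exact mul_nonneg (pow_nonneg ht'.le _) hlog0
    rw [Real.norm_of_nonneg hf0]
    have h1 : Real.log (1 + Real.exp t) ≤ Real.log 2 + t := by
      have : (1:ℝ) + Real.exp t ≤ 2 * Real.exp t := by
        nlinarith [Real.one_le_exp ht'.le]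
      calc Real.log (1 + Real.exp t) ≤ Real.log (2 * Real.exp t) :=
            Real.log_le_log hd this
        _ = Real.log 2 + t := by rw [Real.log_mul two_ne_zero het.ne', Real.log_exp]
    have h2 : (1 + Real.exp t)⁻¹ ≤ (Real.exp t)⁻¹ := by
      apply inv_anti₀ het
      linarith
    calc f t = t^(2*m) * Real.log (1 + Real.exp t) * (1 + Real.exp t)⁻¹ := by
          rw [hfdef]; ring
      _ ≤ t^(2*m) * (Real.log 2 + t) * (Real.exp t)⁻¹ := by
          apply mul_le_mul _ h2 (by positivity) (by positivity)
          exact mul_le_mul_of_nonneg_left h1 (pow_nonneg ht'.le _)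
      _ = t^(2*m+1) * Real.exp (-(1*t)) + Real.log 2 * (t^(2*m) * Real.exp (-(1*t))) := by
          rw [one_mul, Real.exp_neg]
          ring
  have hint_pos : IntegrableOn f (Ioi 0) := by
    refine Integrable.mono' ((aux_integrable (2*m+1) one_pos).add
      (((aux_integrable (2*m) one_pos)).const_mul (Real.log 2)))
      (hfc.aestronglyMeasurable.restrict) ?_
    filter_upwards [ae_restrict_mem measurableSet_Ioi] with t ht
    exact hbound_pos t ht
  have hbound_neg : ∀ t ∈ Ioi (0:ℝ), ‖f (-t)‖ ≤ t^(2*m) * Real.exp (-(1*t)) := by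
    intro t ht
    have ht' : (0:ℝ) < t := ht
    have het : (0:ℝ) < Real.exp (-t) := Real.exp_pos _
    have hd : (0:ℝ) < 1 + Real.exp (-t) := by positivity
    have hlog0 : 0 ≤ Real.log (1 + Real.exp (-t)) := Real.log_nonneg (by linarith)
    have hnegpow : (-t)^(2*m) = t^(2*m) := by
      rw [Even.neg_pow (even_two_mul m)]
    have hf0 : 0 ≤ f (-t) := by
      rw [hfdef]
      apply div_nonneg _ hd.le
      simp only [hnegpow]
      exact mul_nonneg (pow_nonneg ht'.le _) hlog0
    rw [Real.norm_of_nonneg hf0]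
    have h1 : Real.log (1 + Real.exp (-t)) ≤ Real.exp (-t) := by
      have := Real.log_le_sub_one_of_pos hd
      linarith
    have h2 : (1 + Real.exp (-t))⁻¹ ≤ 1 := by
      rw [inv_le_one_iff₀]
      right; linarith
    calc f (-t) = t^(2*m) * Real.log (1 + Real.exp (-t)) * (1 + Real.exp (-t))⁻¹ := by
          rw [hfdef]; simp only [hnegpow]; ring
      _ ≤ t^(2*m) * Real.exp (-t) * 1 := by
          apply mul_le_mul _ h2 (by positivity) (by positivity)
          exact mul_le_mul_of_nonneg_left h1 (pow_nonneg ht'.le _)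
      _ = t^(2*m) * Real.exp (-(1*t)) := by rw [one_mul]; ring
  have hint_neg : IntegrableOn (fun t ↦ f (-t)) (Ioi 0) := by
    refine Integrable.mono' (aux_integrable (2*m) one_pos)
      ((hfc.comp continuous_neg).aestronglyMeasurable.restrict) ?_
    filter_upwards [ae_restrict_mem measurableSet_Ioi] with t ht
    exact hbound_neg t ht
  have hint_Iic : IntegrableOn f (Iic 0) := by
    have h := (MeasurePreserving.integrableOn_comp_preimage
      (Measure.measurePreserving_neg (volume : Measure ℝ))
      (Homeomorph.neg ℝ).measurableEmbedding).2 hint_neg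
    have : (fun x : ℝ ↦ -x) ⁻¹' (Ioi 0) = Iio (0:ℝ) := by
      ext x; simp
    rw [this] at h
    have h2 : IntegrableOn (fun x : ℝ ↦ f (- -x)) (Iio 0) := h
    simp only [neg_neg] at h2
    exact (integrableOn_Iic_iff_integrableOn_Iio).2 h2
  have hint : Integrable f := by
    rw [← integrableOn_univ, show (univ : Set ℝ) = Iic 0 ∪ Ioi 0 from (Iic_union_Ioi).symm]
    exact hint_Iic.union hint_pos
  -- auxiliary integrability of the two pieces
  have hg1int : IntegrableOn (fun t : ℝ ↦ t^(2*m+1) * (1 / (Real.exp t + 1))) (Ioi 0) := by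
    refine Integrable.mono' (aux_integrable (2*m+1) one_pos)
      (((continuous_pow _).mul ((continuous_const.div
        (Real.continuous_exp.add continuous_const) (fun t ↦ ne_of_gt (by positivity : (0:ℝ) < Real.exp t + 1))))).aestronglyMeasurable.restrict) ?_
    filter_upwards [ae_restrict_mem measurableSet_Ioi] with t ht
    have ht' : (0:ℝ) < t := ht
    have het : (0:ℝ) < Real.exp t := Real.exp_pos t
    have h0 : (0:ℝ) ≤ t^(2*m+1) * (1 / (Real.exp t + 1)) := by positivity
    rw [Real.norm_of_nonneg h0, one_mul, Real.exp_neg]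
    apply mul_le_mul_of_nonneg_left _ (pow_nonneg ht'.le _)
    rw [one_div]
    apply inv_anti₀ het
    linarith
  have hg2int : IntegrableOn (fun t : ℝ ↦ t^(2*m) * Real.log (1 + Real.exp (-t))) (Ioi 0) := by
    refine Integrable.mono' (aux_integrable (2*m) one_pos)
      (((continuous_pow _).mul ((continuous_const.add
        (Real.continuous_exp.comp continuous_neg)).log
        (fun t ↦ ne_of_gt (by simp only [Function.comp_apply, Pi.add_apply]; positivity)))).aestronglyMeasurable.restrict) ?_
    filter_upwards [ae_restrict_mem measurableSet_Ioi] with t ht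
    have ht' : (0:ℝ) < t := ht
    have het : (0:ℝ) < Real.exp (-t) := Real.exp_pos _
    have hlog0 : 0 ≤ Real.log (1 + Real.exp (-t)) := Real.log_nonneg (by linarith)
    have h1 : Real.log (1 + Real.exp (-t)) ≤ Real.exp (-t) := by
      have := Real.log_le_sub_one_of_pos (show (0:ℝ) < 1 + Real.exp (-t) by positivity)
      linarith
    rw [Real.norm_of_nonneg (mul_nonneg (pow_nonneg ht'.le _) hlog0), one_mul]
    exact mul_le_mul_of_nonneg_left h1 (pow_nonneg ht'.le _)
  -- split the integral
  have hsplit : (∫ t : ℝ, f t)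
      = (∫ t in Ioi (0:ℝ), t^(2*m+1) * (1 / (Real.exp t + 1)))
        + ∫ t in Ioi (0:ℝ), t^(2*m) * Real.log (1 + Real.exp (-t)) := by
    have h1 : (∫ t : ℝ, f t) = (∫ t in Iic (0:ℝ), f t) + ∫ t in Ioi (0:ℝ), f t :=
      (intervalIntegral.integral_Iic_add_Ioi hint_Iic hint_pos).symm
    have h2 : (∫ t in Iic (0:ℝ), f t) = ∫ t in Ioi (0:ℝ), f (-t) := by
      rw [← neg_zero, ← integral_comp_neg_Ioi]
      simp
    have h3 : (∫ t in Ioi (0:ℝ), f (-t)) + (∫ t in Ioi (0:ℝ), f t)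
        = ∫ t in Ioi (0:ℝ), (f (-t) + f t) := (integral_add hint_neg hint_pos).symm
    have h4 : ∀ t : ℝ, 0 < t → f (-t) + f t
        = t^(2*m+1) * (1 / (Real.exp t + 1)) + t^(2*m) * Real.log (1 + Real.exp (-t)) := by
      intro t ht
      have het : (0:ℝ) < Real.exp t := Real.exp_pos t
      have het' : (0:ℝ) < Real.exp (-t) := Real.exp_pos _
      have hmul : Real.exp t * Real.exp (-t) = 1 := by
        rw [← Real.exp_add]; simp
      have hlog : Real.log (1 + Real.exp t) = t + Real.log (1 + Real.exp (-t)) := by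
        have hsplit2 : (1:ℝ) + Real.exp t = Real.exp t * (1 + Real.exp (-t)) := by
          nlinarith [hmul]
        rw [hsplit2, Real.log_mul het.ne' (by positivity), Real.log_exp]
      have hnegpow : (-t)^(2*m) = t^(2*m) := Even.neg_pow (even_two_mul m) t
      rw [hfdef]
      simp only [hnegpow]
      rw [hlog, Real.exp_neg]
      have hd1 : (1:ℝ) + Real.exp t ≠ 0 := by positivity
      have hd2 : (1:ℝ) + (Real.exp t)⁻¹ ≠ 0 := by positivity
      have hd3 : Real.exp t + 1 ≠ 0 := by positivity
      field_simp
      ring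
    have h5 : (∫ t in Ioi (0:ℝ), (f (-t) + f t))
        = ∫ t in Ioi (0:ℝ), (t^(2*m+1) * (1 / (Real.exp t + 1))
            + t^(2*m) * Real.log (1 + Real.exp (-t))) := by
      refine setIntegral_congr_fun measurableSet_Ioi (fun t ht ↦ h4 t ht)
    rw [h1, h2, h3, h5, integral_add hg1int hg2int]
  -- value of the full integral
  have hJ : (∫ t : ℝ, f t)
      = (((2*m+1).factorial : ℝ) + ((2*m).factorial : ℝ)) * ((1 - 2 * c) * Z) := by
    rw [hsplit, hIval1, hIval2]; ring
  -- zeta as a sum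
  have hcast : (2 * ((m:ℂ) + 1)) = (((2*m+2 : ℕ)):ℂ) := by push_cast; ring
  have hzeta : riemannZeta (2 * ((m+1:ℕ):ℂ)) = (Z : ℂ) := by
    rw [show ((m+1:ℕ):ℂ) = (m:ℂ) + 1 by push_cast; ring, hcast,
      zeta_eq_tsum_one_div_nat_add_one_cpow (by
        rw [Complex.natCast_re]; push_cast; linarith [Nat.cast_nonneg (α := ℝ) m])]
    have e : ∀ k : ℕ, (1 / ((k:ℂ)+1) ^ (((2*m+2:ℕ)):ℂ)) = ((1 / ((k:ℝ)+1) ^ (2*m+2) : ℝ) : ℂ) := by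
      intro k
      rw [Complex.cpow_natCast]
      push_cast
      ring
    rw [tsum_congr e, ← Complex.ofReal_tsum]
  -- final algebra
  have hGamma : Real.Gamma (2 * ((m+1:ℕ):ℝ) - 1) = ((2*m).factorial : ℝ) := by
    rw [show (2 * ((m+1:ℕ):ℝ) - 1) = ((2*m : ℕ):ℝ) + 1 by push_cast; ring,
      Real.Gamma_nat_eq_factorial]
  have hzpow : (2:ℝ) ^ ((2:ℤ) - 2 * ((m+1:ℕ):ℤ)) = ((2:ℝ) ^ (2*m))⁻¹ := by
    rw [show ((2:ℤ) - 2 * ((m+1:ℕ):ℤ)) = -((2*m:ℕ):ℤ) by push_cast; ring,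
      zpow_neg, zpow_natCast]
  have hfact : ((2*m+1).factorial : ℝ) = ((2*m:ℕ):ℝ) * ((2*m).factorial : ℝ)
      + ((2*m).factorial : ℝ) := by
    rw [Nat.factorial_succ]
    push_cast
    ring
  have hP1 : (1:ℝ) ≤ (2:ℝ) ^ (2*m) := one_le_pow₀ (by norm_num)
  have hc4 : (2:ℝ) ^ (2*m+2) = 4 * (2:ℝ) ^ (2*m) := by
    rw [pow_add]
    ring
  rw [hzeta]
  congr 1
  rw [hJ, hGamma, hzpow]
  set P : ℝ := (2:ℝ) ^ (2*m) with hPdef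
  have hcP : c = (4 * P)⁻¹ := by rw [hcdef, hc4]
  have hF0 : ((2*m).factorial : ℝ) ≠ 0 := Nat.cast_ne_zero.2 (Nat.factorial_ne_zero _)
  have hP0 : P ≠ 0 := by positivity
  have hm0 : ((m+1:ℕ):ℝ) ≠ 0 := by positivity
  have h2P : (2:ℝ) - P⁻¹ ≠ 0 := by
    have : P⁻¹ ≤ 1 := inv_le_one_of_one_le₀ hP1
    intro hcon
    have : P⁻¹ = 2 := by linarith
    linarith
  rw [hcP, hfact]
  have hm1 : ((m+1:ℕ):ℝ) = (m:ℝ) + 1 := by push_cast; ring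
  rw [hm1]
  have hX0 : ((m:ℝ) + 1) * (2 - P⁻¹) * ((2*m).factorial : ℝ) ≠ 0 := by
    refine mul_ne_zero (mul_ne_zero ?_ h2P) hF0
    positivity
  have hcoeff : ((((2*m:ℕ):ℝ) * ((2*m).factorial:ℝ) + ((2*m).factorial:ℝ))
        + ((2*m).factorial:ℝ)) * (1 - 2 * (4*P)⁻¹)
      = ((m:ℝ) + 1) * (2 - P⁻¹) * ((2*m).factorial:ℝ) := by
    have hP0' : (4:ℝ) * P ≠ 0 := by positivity
    field_simp
    push_cast
    ring
  calc Z = 1 / (((m:ℝ)+1) * (2 - P⁻¹) * ((2*m).factorial:ℝ))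
        * ((((m:ℝ)+1) * (2 - P⁻¹) * ((2*m).factorial:ℝ)) * Z) := by
        rw [one_div, inv_mul_cancel_left₀ hX0]
    _ = _ := by rw [← hcoeff]; ring
end

section
/- For every natural number m ≥ 0, ∑_{i=0}^{m} (2^{2i} - 2) · C(2m+1, 2i) · B_{2i} = -δ_{m,0}, where δ_{m,0} is 1 if m = 0 and 0 otherwise. -/
open PowerSeries Finset Nat

private lemma my_bernoulli_odd_eq_zero {n : ℕ} (h : Odd n) (h1 : 1 < n) :
    bernoulli n = 0 := by
  rw [bernoulli_eq_bernoulli'_of_ne_one (by omega), bernoulli'_eq_zero_of_odd h h1]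

private lemma coeff_two_mul (f : ℚ⟦X⟧) (k : ℕ) :
    PowerSeries.coeff (R := ℚ) k (2 * f) = 2 * PowerSeries.coeff (R := ℚ) k f := by
  rw [show (2 : ℚ⟦X⟧) = PowerSeries.C (R := ℚ) 2 from (map_ofNat (PowerSeries.C (R := ℚ)) 2).symm,
    PowerSeries.coeff_C_mul]

private lemma rescale_two_X : rescale (2 : ℚ) X = 2 * X := by
  ext n
  rw [coeff_rescale, coeff_two_mul, PowerSeries.coeff_X]
  rcases eq_or_ne n 1 with rfl | hn
  · norm_num
  · simp [hn]

-- key power-series identity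
private lemma key_ps :
    (rescale (2 : ℚ) (bernoulliPowerSeries ℚ) - 2 * bernoulliPowerSeries ℚ) * exp ℚ =
      -(2 * X + rescale (2 : ℚ) (bernoulliPowerSeries ℚ)) := by
  have hE2 : exp ℚ * exp ℚ = rescale (2 : ℚ) (exp ℚ) := by
    have := exp_pow_eq_rescale_exp (A := ℚ) 2
    simpa [sq] using this
  have h1 : bernoulliPowerSeries ℚ * (exp ℚ - 1) = X := bernoulliPowerSeries_mul_exp_sub_one ℚ
  have h2 : rescale (2 : ℚ) (bernoulliPowerSeries ℚ) * (exp ℚ * exp ℚ - 1) = 2 * X := by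
    rw [hE2]
    have : rescale (2:ℚ) (bernoulliPowerSeries ℚ) * (rescale (2:ℚ) (exp ℚ) - 1)
        = rescale (2:ℚ) (bernoulliPowerSeries ℚ * (exp ℚ - 1)) := by
      rw [map_mul, map_sub, map_one]
    rw [this, h1, rescale_two_X]
  have hne : exp ℚ * exp ℚ - 1 ≠ 0 := by
    intro h0
    have hc : (PowerSeries.coeff (R := ℚ) 1) (exp ℚ * exp ℚ - 1) = 2 := by
      rw [hE2]
      rw [map_sub, coeff_rescale, PowerSeries.coeff_exp]
      norm_num
    rw [h0] at hc
    simp at hc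
  apply mul_right_cancel₀ hne
  have expand : (rescale (2 : ℚ) (bernoulliPowerSeries ℚ) - 2 * bernoulliPowerSeries ℚ) * exp ℚ
        * (exp ℚ * exp ℚ - 1) =
      rescale (2 : ℚ) (bernoulliPowerSeries ℚ) * (exp ℚ * exp ℚ - 1) * exp ℚ
        - 2 * (bernoulliPowerSeries ℚ * (exp ℚ - 1)) * ((exp ℚ + 1) * exp ℚ) := by ring
  have expand2 : -(2 * X + rescale (2 : ℚ) (bernoulliPowerSeries ℚ)) * (exp ℚ * exp ℚ - 1) =
      -(2 * X) * (exp ℚ * exp ℚ - 1)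
        - rescale (2 : ℚ) (bernoulliPowerSeries ℚ) * (exp ℚ * exp ℚ - 1) := by ring
  rw [expand, expand2, h1, h2]
  ring

private lemma coeff_lhs (n : ℕ) :
    (∑ k ∈ range (n + 1), ((2:ℚ)^k - 2) * (n.choose k : ℚ) * bernoulli k) =
      (n.factorial : ℚ) * PowerSeries.coeff (R := ℚ) n
        ((rescale (2 : ℚ) (bernoulliPowerSeries ℚ) - 2 * bernoulliPowerSeries ℚ) * exp ℚ) := by
  rw [PowerSeries.coeff_mul, Finset.Nat.sum_antidiagonal_eq_sum_range_succ_mk, mul_sum]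
  refine sum_congr rfl fun k hk => ?_
  have hkn : k ≤ n := Nat.lt_succ_iff.mp (mem_range.mp hk)
  rw [map_sub, coeff_rescale, coeff_two_mul, PowerSeries.coeff_exp]
  simp only [bernoulliPowerSeries, PowerSeries.coeff_mk, Algebra.algebraMap_self, map_one,
    RingHom.id_apply, Algebra.algebraMap_self]
  rw [Nat.cast_choose ℚ hkn]
  have hk0 : (k.factorial : ℚ) ≠ 0 := by exact_mod_cast Nat.factorial_ne_zero k
  have hnk0 : ((n - k).factorial : ℚ) ≠ 0 := by exact_mod_cast Nat.factorial_ne_zero (n - k)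
  field_simp

/-- For every natural number `m ≥ 0`,
`∑_{i=0}^m (2^{2i} - 2) · C(2m+1, 2i) · B_{2i} = -δ_{m,0}`. -/
theorem sum_two_pow_sub_two_choose_bernoulli (m : ℕ) :
    ∑ i ∈ Finset.range (m + 1),
        ((2 : ℚ) ^ (2 * i) - 2) * (Nat.choose (2 * m + 1) (2 * i) : ℚ) * bernoulli (2 * i) =
      -(if m = 0 then 1 else 0) := by
  set n := 2 * m + 1 with hn
  have hodd : ∀ k, Odd k → ((2:ℚ)^k - 2) * (n.choose k : ℚ) * bernoulli k = 0 := by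
    intro k hk
    rcases eq_or_ne k 1 with rfl | hk1
    · norm_num
    · have : 1 < k := by rcases hk with ⟨j, rfl⟩; omega
      rw [my_bernoulli_odd_eq_zero hk this, mul_zero]
  have hfull : (∑ k ∈ range (n + 1), ((2:ℚ)^k - 2) * (n.choose k : ℚ) * bernoulli k) =
      ∑ i ∈ range (m + 1), ((2:ℚ)^(2*i) - 2) * (n.choose (2*i) : ℚ) * bernoulli (2*i) := by
    have hsplit : ∀ N : ℕ, (∑ k ∈ range (2 * N), ((2:ℚ)^k - 2) * (n.choose k : ℚ) * bernoulli k)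
        = ∑ i ∈ range N, ((2:ℚ)^(2*i) - 2) * (n.choose (2*i) : ℚ) * bernoulli (2*i) := by
      intro N
      induction N with
      | zero => simp
      | succ N ih =>
        rw [Nat.mul_succ, sum_range_succ, sum_range_succ, sum_range_succ, ih,
          hodd (2*N+1) ⟨N, by ring⟩, add_zero]
    have h2 : n + 1 = 2 * (m + 1) := by omega
    rw [h2, hsplit]
  rw [← hfull, coeff_lhs, key_ps]
  have hcoeff : PowerSeries.coeff (R := ℚ) n
      (-(2 * X + rescale (2 : ℚ) (bernoulliPowerSeries ℚ))) =
      -(2 * (if n = 1 then 1 else 0) + 2^n * bernoulli n / n.factorial) := by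
    rw [map_neg, map_add, coeff_two_mul, coeff_rescale, PowerSeries.coeff_X]
    simp only [bernoulliPowerSeries, PowerSeries.coeff_mk, Algebra.algebraMap_self, RingHom.id_apply]
    ring
  rw [hcoeff]
  rcases Nat.eq_zero_or_pos m with rfl | hm
  · have h1 : n = 1 := by omega
    rw [if_pos rfl, h1]
    norm_num
  · have hm0 : m ≠ 0 := by omega
    have hB : bernoulli n = 0 := my_bernoulli_odd_eq_zero ⟨m, by omega⟩ (by omega)
    rw [if_neg hm0, hB]
    have hn1 : n ≠ 1 := by omega
    rw [if_neg hn1]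
    simp
end

section
/- For every natural number n ≥ 0, ∫_{0}^{∞} t^{n+1} / (1 + e^t) dt = (1 - 2^{-1-n}) · ζ(n+2) · Γ(n+2) = (1 - 2^{-1-n}) · (n+1)! · ζ(n+2). -/
open Real MeasureTheory

private lemma aux_hasSum_mellin (n : ℕ) :
    HasSum (fun i : ℕ ↦ Complex.Gamma ((n : ℂ) + 2) * (-1 : ℂ) ^ i / (((i : ℝ) + 1 : ℝ) : ℂ) ^ ((n : ℂ) + 2))
      (mellin (fun t : ℝ ↦ ((1 / (1 + Real.exp t) : ℝ) : ℂ)) ((n : ℂ) + 2)) := by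
  refine hasSum_mellin (a := fun i : ℕ ↦ (-1 : ℂ) ^ i) (p := fun i : ℕ ↦ (i : ℝ) + 1)
    (fun i ↦ Or.inr (by positivity))
    (by simp only [Complex.add_re, Complex.natCast_re, Complex.re_ofNat]; positivity)
    (fun t ht ↦ ?_) ?_
  · -- geometric series
    have ht0 : (0 : ℝ) < t := ht
    set r := Real.exp (-t) with hr
    have hr0 : 0 < r := Real.exp_pos _
    have hr1 : ‖(-r : ℝ)‖ < 1 := by
      rw [norm_neg, Real.norm_eq_abs, abs_of_pos hr0]
      exact Real.exp_lt_one_iff.mpr (by linarith)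
    have hgeo : HasSum (fun i : ℕ ↦ (-r) ^ i * r) ((1 - (-r))⁻¹ * r) :=
      (hasSum_geometric_of_norm_lt_one hr1).mul_right r
    have key : HasSum (fun i : ℕ ↦ (-1 : ℝ) ^ i * Real.exp (-((i : ℝ) + 1) * t))
        (1 / (1 + Real.exp t)) := by
      have hval : (1 - (-r))⁻¹ * r = 1 / (1 + Real.exp t) := by
        have hrt : r * Real.exp t = 1 := by
          rw [hr, ← Real.exp_add]; simp
        have h1 : (0:ℝ) < 1 + r := by linarith
        have h2 : (0:ℝ) < 1 + Real.exp t := by positivity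
        rw [sub_neg_eq_add]
        field_simp
        nlinarith [hrt]
      have hfun : (fun i : ℕ ↦ (-1 : ℝ) ^ i * Real.exp (-((i : ℝ) + 1) * t)) =
          fun i : ℕ ↦ (-r) ^ i * r := by
        funext i
        have h1 : Real.exp (-((i : ℝ) + 1) * t) = r ^ (i + 1) := by
          rw [hr, ← Real.exp_nat_mul]
          congr 1
          push_cast
          ring
        rw [h1, neg_pow, pow_succ]
        ring
      rw [hfun, ← hval]
      exact hgeo
    have := Complex.hasSum_ofReal.mpr key
    simpa [Complex.ofReal_mul, Complex.ofReal_pow] using this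
  · -- summability
    have h1 : Summable (fun i : ℕ ↦ 1 / ((i : ℝ)) ^ ((n : ℝ) + 2)) :=
      Real.summable_one_div_nat_rpow.mpr
        (by have : (0:ℝ) ≤ n := n.cast_nonneg; linarith)
    have h2 := (summable_nat_add_iff 1).mpr h1
    refine h2.congr fun i ↦ ?_
    have hn : ‖(-1 : ℂ) ^ i‖ = 1 := by
      rw [norm_pow, norm_neg, norm_one, one_pow]
    rw [hn]
    have : (((n : ℂ) + 2)).re = (n : ℝ) + 2 := by
      simp [Complex.add_re]
    rw [this]
    push_cast
    norm_num

/-- For every natural number `n ≥ 0`,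
`∫_0^∞ t^{n+1}/(1+e^t) dt = (1 - 2^{-1-n})·ζ(n+2)·Γ(n+2) = (1 - 2^{-1-n})·(n+1)!·ζ(n+2)`. -/
theorem integral_pow_div_one_add_exp (n : ℕ) :
    ((∫ t in Set.Ioi (0 : ℝ), t ^ (n + 1) / (1 + Real.exp t) : ℝ) : ℂ) =
        (1 - (2 : ℂ) ^ (-1 - (n : ℤ))) * riemannZeta (n + 2) * Complex.Gamma (n + 2) ∧
      ((∫ t in Set.Ioi (0 : ℝ), t ^ (n + 1) / (1 + Real.exp t) : ℝ) : ℂ) =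
        (1 - (2 : ℂ) ^ (-1 - (n : ℤ))) * (Nat.factorial (n + 1)) * riemannZeta (n + 2) := by
  set s : ℂ := (n : ℂ) + 2 with hs
  have hmel := aux_hasSum_mellin n
  -- identify the mellin transform with the real integral
  have hint : mellin (fun t : ℝ ↦ ((1 / (1 + Real.exp t) : ℝ) : ℂ)) s =
      ((∫ t in Set.Ioi (0 : ℝ), t ^ (n + 1) / (1 + Real.exp t) : ℝ) : ℂ) := by
    rw [mellin]
    have hcongr : ∫ t in Set.Ioi (0:ℝ), (t : ℂ) ^ (s - 1) • ((1 / (1 + Real.exp t) : ℝ) : ℂ)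
        = ∫ t in Set.Ioi (0:ℝ), ((t ^ (n + 1) / (1 + Real.exp t) : ℝ) : ℂ) := by
      refine setIntegral_congr_fun measurableSet_Ioi fun t ht ↦ ?_
      have h1 : s - 1 = ((n + 1 : ℕ) : ℂ) := by push_cast [hs]; ring
      rw [smul_eq_mul, h1, Complex.cpow_natCast]
      push_cast
      ring
    rw [hcongr]
    exact integral_ofReal
  have hone : (0:ℝ) ≤ n := n.cast_nonneg
  have hsre : 1 < s.re := by
    simp only [hs, Complex.add_re, Complex.natCast_re, Complex.re_ofNat]
    linarith
  have hZsum : Summable (fun i : ℕ ↦ 1 / ((i : ℂ) + 1) ^ s) := by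
    have h0 := (Complex.summable_one_div_nat_cpow (p := s)).mpr hsre
    have h2 := (summable_nat_add_iff 1).mpr h0
    refine h2.congr fun i ↦ ?_
    rw [Nat.cast_add, Nat.cast_one]
  have hzeta : riemannZeta s = ∑' i : ℕ, 1 / ((i : ℂ) + 1) ^ s := by
    rw [zeta_eq_tsum_one_div_nat_add_one_cpow hsre]
  -- split into even and odd parts
  have hval : ∑' i : ℕ, (-1 : ℂ) ^ i / ((i : ℂ) + 1) ^ s
      = (1 - 2 * (2 : ℂ) ^ (-s)) * riemannZeta s := by
    set Z : ℕ → ℂ := fun i ↦ 1 / ((i : ℂ) + 1) ^ s with hZ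
    have heven : Summable fun k : ℕ ↦ Z (2 * k) :=
      hZsum.comp_injective (fun a b h ↦ by omega)
    have hodd : Summable fun k : ℕ ↦ Z (2 * k + 1) :=
      hZsum.comp_injective (fun a b h ↦ by omega)
    have hsplit : (∑' k, Z (2 * k)) + ∑' k, Z (2 * k + 1) = ∑' i, Z i :=
      tsum_even_add_odd heven hodd
    have hevf : Summable fun k : ℕ ↦ (-1 : ℂ) ^ (2 * k) * Z (2 * k) :=
      heven.congr fun k ↦ by simp [pow_mul]
    have hodf : Summable fun k : ℕ ↦ (-1 : ℂ) ^ (2 * k + 1) * Z (2 * k + 1) :=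
      hodd.neg.congr fun k ↦ by simp [pow_mul, pow_succ]
    have hodd_val : ∑' k, Z (2 * k + 1) = (2 : ℂ) ^ (-s) * riemannZeta s := by
      rw [hzeta, ← tsum_mul_left]
      refine tsum_congr fun k ↦ ?_
      have h2 : ((2 * k + 1 : ℕ) : ℂ) + 1 = ((2 : ℝ) : ℂ) * (((k : ℝ) + 1 : ℝ) : ℂ) := by
        push_cast; ring
      simp only [hZ, h2]
      rw [Complex.mul_cpow_ofReal_nonneg (by norm_num) (by positivity), Complex.cpow_neg]
      push_cast
      field_simp
    calc ∑' i : ℕ, (-1 : ℂ) ^ i / ((i : ℂ) + 1) ^ s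
        = ∑' i : ℕ, (-1 : ℂ) ^ i * Z i := tsum_congr fun i ↦ div_eq_mul_one_div _ _
      _ = (∑' k, (-1 : ℂ) ^ (2 * k) * Z (2 * k))
            + ∑' k, (-1 : ℂ) ^ (2 * k + 1) * Z (2 * k + 1) :=
          (tsum_even_add_odd (f := fun i ↦ (-1 : ℂ) ^ i * Z i) hevf hodf).symm
      _ = (∑' k, Z (2 * k)) - ∑' k, Z (2 * k + 1) := by
          have e1 : ∑' k, (-1 : ℂ) ^ (2 * k) * Z (2 * k) = ∑' k, Z (2 * k) :=
            tsum_congr fun k ↦ by simp [pow_mul]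
          have e2 : ∑' k, (-1 : ℂ) ^ (2 * k + 1) * Z (2 * k + 1) = -∑' k, Z (2 * k + 1) := by
            rw [← tsum_neg]
            exact tsum_congr fun k ↦ by simp [pow_mul, pow_succ]
          rw [e1, e2]; ring
      _ = (1 - 2 * (2 : ℂ) ^ (-s)) * riemannZeta s := by
          rw [← hzeta] at hsplit
          linear_combination hsplit - 2 * hodd_val
  -- put it together
  have hGmul : HasSum (fun i : ℕ ↦ Complex.Gamma s * ((-1 : ℂ) ^ i / ((i : ℂ) + 1) ^ s))
      (mellin (fun t : ℝ ↦ ((1 / (1 + Real.exp t) : ℝ) : ℂ)) s) := by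
    refine hmel.congr_fun fun i ↦ ?_
    rw [mul_div_assoc]
    push_cast
    rw [hs]
  have hmain : ((∫ t in Set.Ioi (0 : ℝ), t ^ (n + 1) / (1 + Real.exp t) : ℝ) : ℂ)
      = Complex.Gamma s * ((1 - 2 * (2 : ℂ) ^ (-s)) * riemannZeta s) := by
    rw [← hint, ← hGmul.tsum_eq, tsum_mul_left, hval]
  have hconst : 2 * (2 : ℂ) ^ (-s) = (2 : ℂ) ^ (-1 - (n : ℤ)) := by
    have h1 : (-s : ℂ) = ((-(n : ℤ) - 2 : ℤ) : ℂ) := by push_cast [hs]; ring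
    rw [h1, Complex.cpow_intCast, ← zpow_one_add₀ (two_ne_zero)]
    congr 1
    ring
  have hGamma : Complex.Gamma s = (Nat.factorial (n + 1) : ℂ) := by
    have h := Complex.Gamma_nat_eq_factorial (n + 1)
    rw [hs, ← h]
    congr 1
    push_cast
    ring
  constructor
  · rw [hmain, hconst]; ring
  · rw [hmain, hconst, hGamma]; ring
end

section
/- For every natural number n ≥ 0, ∫_{0}^{∞} t^n · log(1 + e^{-t}) dt = (1/(n+1)) · ∫_{0}^{∞} t^{n+1} / (1 + e^t) dt, and hence ∫_{0}^{∞} t^n · log(1 + e^{-t}) dt = n! · (1 - 2^{-1-n}) · ζ(n+2). -/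
open Real MeasureTheory Set

namespace IntegralPowLogAuxNS

lemma integrable_aux (m k : ℕ) :
    IntegrableOn (fun t : ℝ => t ^ m * Real.exp (-(((k : ℝ) + 1) * t))) (Ioi 0) := by
  have h := integrableOn_rpow_mul_exp_neg_mul_rpow (s := (m : ℝ)) (p := 1) (b := (k : ℝ) + 1)
    (lt_of_lt_of_le neg_one_lt_zero (Nat.cast_nonneg m)) one_pos (by positivity)
  refine h.congr_fun (fun t ht => ?_) measurableSet_Ioi
  beta_reduce
  rw [Real.rpow_one, Real.rpow_natCast, neg_mul]

lemma integral_aux (m k : ℕ) :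
    ∫ t in Ioi (0 : ℝ), t ^ m * Real.exp (-(((k : ℝ) + 1) * t)) =
      (m.factorial : ℝ) / ((k : ℝ) + 1) ^ (m + 1) := by
  have h := Real.integral_rpow_mul_exp_neg_mul_Ioi (a := (m : ℝ) + 1) (r := (k : ℝ) + 1)
    (by positivity) (by positivity)
  rw [show (m : ℝ) + 1 - 1 = (m : ℝ) by ring] at h
  simp_rw [Real.rpow_natCast] at h
  rw [h, Real.Gamma_nat_eq_factorial,
    show ((1 : ℝ) / ((k : ℝ) + 1)) ^ ((m : ℝ) + 1)
      = ((1 : ℝ) / ((k : ℝ) + 1)) ^ (((m + 1 : ℕ) : ℝ)) by push_cast; ring_nf,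
    Real.rpow_natCast, div_pow, one_pow]
  ring

lemma helper_div (a b : ℝ) (m : ℕ) (ha : a ≠ 0) :
    b * (1 / a ^ (m + 2)) = 1 / a * (b / a ^ (m + 1)) := by
  rw [show a ^ (m + 2) = a * a ^ (m + 1) by ring, one_div, one_div, mul_inv]
  ring

lemma integral_tsum_aux (m : ℕ) (c : ℕ → ℝ)
    (hsum : Summable fun k : ℕ => |c k| * ((m.factorial : ℝ) / ((k : ℝ) + 1) ^ (m + 1))) :
    ∫ t in Ioi (0 : ℝ), ∑' k : ℕ, c k * (t ^ m * Real.exp (-(((k : ℝ) + 1) * t))) =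
      ∑' k : ℕ, c k * ((m.factorial : ℝ) / ((k : ℝ) + 1) ^ (m + 1)) := by
  rw [← MeasureTheory.integral_tsum_of_summable_integral_norm]
  · exact tsum_congr fun k => by rw [integral_const_mul, integral_aux]
  · exact fun k => (integrable_aux m k).const_mul (c k)
  · refine hsum.congr fun k => ?_
    simp_rw [norm_mul, Real.norm_eq_abs]
    rw [integral_const_mul]
    congr 1
    rw [← integral_aux m k]
    refine setIntegral_congr_fun measurableSet_Ioi fun t ht => ?_
    rw [abs_of_nonneg (pow_nonneg (le_of_lt ht) m),
      abs_of_nonneg (Real.exp_nonneg _)]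

lemma abs_neg_exp_lt_one {t : ℝ} (ht : 0 < t) : |(-Real.exp (-t))| < 1 := by
  rw [abs_neg, abs_of_pos (Real.exp_pos _), Real.exp_lt_one_iff]
  linarith

lemma exp_pow_eq (t : ℝ) (k : ℕ) :
    Real.exp (-t) ^ (k + 1) = Real.exp (-(((k : ℝ) + 1) * t)) := by
  rw [← Real.exp_nat_mul]
  congr 1
  push_cast
  ring

lemma hasSum_log_aux {t : ℝ} (ht : 0 < t) (n : ℕ) :
    HasSum (fun k : ℕ => ((-1 : ℝ) ^ k / ((k : ℝ) + 1)) *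
        (t ^ n * Real.exp (-(((k : ℝ) + 1) * t))))
      (t ^ n * Real.log (1 + Real.exp (-t))) := by
  have h := (hasSum_pow_div_log_of_abs_lt_one (abs_neg_exp_lt_one ht)).mul_left (-(t ^ n))
  rw [sub_neg_eq_add] at h
  have hfun : (fun k : ℕ => -(t ^ n) * ((-Real.exp (-t)) ^ (k + 1) / ((k : ℝ) + 1)))
      = fun k : ℕ => ((-1 : ℝ) ^ k / ((k : ℝ) + 1)) *
        (t ^ n * Real.exp (-(((k : ℝ) + 1) * t))) := by
    funext k
    rw [neg_pow, exp_pow_eq, pow_succ]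
    ring
  rw [hfun] at h
  have : -(t ^ n) * -Real.log (1 + Real.exp (-t)) = t ^ n * Real.log (1 + Real.exp (-t)) := by
    ring
  rwa [this] at h

lemma hasSum_geom_aux {t : ℝ} (ht : 0 < t) (n : ℕ) :
    HasSum (fun k : ℕ => ((-1 : ℝ) ^ k) *
        (t ^ (n + 1) * Real.exp (-(((k : ℝ) + 1) * t))))
      (t ^ (n + 1) / (1 + Real.exp t)) := by
  have h := (hasSum_geometric_of_norm_lt_one (ξ := -Real.exp (-t))
    (by simpa using abs_neg_exp_lt_one ht)).mul_left (t ^ (n + 1) * Real.exp (-t))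
  have hfun : (fun k : ℕ => t ^ (n + 1) * Real.exp (-t) * (-Real.exp (-t)) ^ k)
      = fun k : ℕ => ((-1 : ℝ) ^ k) *
        (t ^ (n + 1) * Real.exp (-(((k : ℝ) + 1) * t))) := by
    funext k
    rw [neg_pow, show Real.exp (-(((k : ℝ) + 1) * t)) = Real.exp (-t) ^ (k + 1) from
      (exp_pow_eq t k).symm, pow_succ]
    ring
  rw [hfun] at h
  have hval : t ^ (n + 1) * Real.exp (-t) * (1 - -Real.exp (-t))⁻¹
      = t ^ (n + 1) / (1 + Real.exp t) := by
    rw [sub_neg_eq_add, Real.exp_neg]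
    have h1 : (0 : ℝ) < Real.exp t := Real.exp_pos t
    rw [eq_div_iff (by positivity)]
    field_simp
    ring
  rwa [hval] at h

lemma summable_base (p : ℕ) (hp : 1 < p) :
    Summable fun k : ℕ => 1 / ((k : ℝ) + 1) ^ p := by
  have h := summable_one_div_nat_pow.2 hp
  have := (_root_.summable_nat_add_iff (f := fun n : ℕ => 1 / (n : ℝ) ^ p) 1).2 h
  refine this.congr fun k => ?_
  push_cast
  ring

end IntegralPowLogAuxNS

open IntegralPowLogAuxNS

/-- For every natural number `n ≥ 0`,
`∫_0^∞ t^n·log(1+e^{-t}) dt = (1/(n+1))·∫_0^∞ t^{n+1}/(1+e^t) dt`, and hence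
`∫_0^∞ t^n·log(1+e^{-t}) dt = n!·(1 - 2^{-1-n})·ζ(n+2)`. -/
theorem integral_pow_mul_log_one_add_exp_neg (n : ℕ) :
    (∫ t in Set.Ioi (0 : ℝ), t ^ n * Real.log (1 + Real.exp (-t))) =
        (1 / (n + 1)) * ∫ t in Set.Ioi (0 : ℝ), t ^ (n + 1) / (1 + Real.exp t) ∧
      ((∫ t in Set.Ioi (0 : ℝ), t ^ n * Real.log (1 + Real.exp (-t)) : ℝ) : ℂ) =
        (Nat.factorial n) * (1 - (2 : ℂ) ^ (-1 - (n : ℤ))) * riemannZeta (n + 2) := by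
  set η : ℝ := ∑' k : ℕ, (-1 : ℝ) ^ k / ((k : ℝ) + 1) ^ (n + 2) with hη
  set Z : ℝ := ∑' k : ℕ, 1 / ((k : ℝ) + 1) ^ (n + 2) with hZ
  have hZsum : Summable fun k : ℕ => 1 / ((k : ℝ) + 1) ^ (n + 2) :=
    summable_base (n + 2) (by omega)
  -- First integral equals n! * η
  have hI1 : (∫ t in Set.Ioi (0 : ℝ), t ^ n * Real.log (1 + Real.exp (-t)))
      = (n.factorial : ℝ) * η := by
    have heq : ∀ t ∈ Ioi (0 : ℝ), t ^ n * Real.log (1 + Real.exp (-t)) =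
        ∑' k : ℕ, ((-1 : ℝ) ^ k / ((k : ℝ) + 1)) *
          (t ^ n * Real.exp (-(((k : ℝ) + 1) * t))) :=
      fun t ht => (hasSum_log_aux ht n).tsum_eq.symm
    rw [setIntegral_congr_fun measurableSet_Ioi heq,
      integral_tsum_aux n _ ?_]
    · rw [hη, ← tsum_mul_left]
      refine tsum_congr fun k => ?_
      have hk : ((k : ℝ) + 1) ≠ 0 := by positivity
      rw [show ((k : ℝ) + 1) ^ (n + 2) = ((k : ℝ) + 1) * ((k : ℝ) + 1) ^ (n + 1) by ring,
        div_mul_div_comm, mul_div_assoc', mul_comm (↑n.factorial : ℝ) ((-1 : ℝ) ^ k)]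
    · refine ((hZsum.mul_left (n.factorial : ℝ)).congr fun k => ?_)
      have hk : (0 : ℝ) < (k : ℝ) + 1 := by positivity
      rw [abs_div, abs_neg_one_pow, abs_of_pos hk]
      exact helper_div _ _ n hk.ne'
  -- Second integral equals (n+1)! * η
  have hI2 : (∫ t in Set.Ioi (0 : ℝ), t ^ (n + 1) / (1 + Real.exp t))
      = ((n + 1).factorial : ℝ) * η := by
    have heq : ∀ t ∈ Ioi (0 : ℝ), t ^ (n + 1) / (1 + Real.exp t) =
        ∑' k : ℕ, ((-1 : ℝ) ^ k) *
          (t ^ (n + 1) * Real.exp (-(((k : ℝ) + 1) * t))) :=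
      fun t ht => (hasSum_geom_aux ht n).tsum_eq.symm
    rw [setIntegral_congr_fun measurableSet_Ioi heq,
      integral_tsum_aux (n + 1) _ ?_]
    · rw [hη, ← tsum_mul_left]
      refine tsum_congr fun k => ?_
      rw [show (n + 1 + 1) = n + 2 from rfl, mul_comm ((-1 : ℝ) ^ k), div_mul_eq_mul_div, mul_div_assoc]
    · refine ((hZsum.mul_left ((n + 1).factorial : ℝ)).congr fun k => ?_)
      rw [abs_neg_one_pow]
      ring
  -- the even/odd splitting of η and Z
  have hOddSummand : Summable fun j : ℕ => 1 / (2 * (j : ℝ) + 1) ^ (n + 2) := by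
    refine Summable.of_nonneg_of_le (fun j => by positivity) (fun j => ?_) hZsum
    have h1 : (0 : ℝ) < ((j : ℝ) + 1) ^ (n + 2) := by positivity
    have h2 : ((j : ℝ) + 1) ^ (n + 2) ≤ (2 * (j : ℝ) + 1) ^ (n + 2) :=
      pow_le_pow_left₀ (by positivity) (by linarith [Nat.cast_nonneg (α := ℝ) j]) _
    exact one_div_le_one_div_of_le h1 h2
  set A : ℝ := ∑' j : ℕ, 1 / (2 * (j : ℝ) + 1) ^ (n + 2) with hA
  have hgo : HasSum (fun j : ℕ => 1 / (((2 * j + 1 : ℕ) : ℝ) + 1) ^ (n + 2))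
      ((1 / 2 ^ (n + 2)) * Z) := by
    have h := hZsum.hasSum.mul_left (1 / 2 ^ (n + 2) : ℝ)
    have hfun : (fun k : ℕ => (1 / 2 ^ (n + 2) : ℝ) * (1 / ((k : ℝ) + 1) ^ (n + 2)))
        = fun j : ℕ => 1 / (((2 * j + 1 : ℕ) : ℝ) + 1) ^ (n + 2) := by
      funext j
      have hc : (((2 * j + 1 : ℕ) : ℝ) + 1) = 2 * ((j : ℝ) + 1) := by push_cast; ring
      rw [hc, mul_pow, one_div, one_div, one_div, mul_inv]
    rw [hfun] at h
    exact h
  have hge : HasSum (fun j : ℕ => 1 / (((2 * j : ℕ) : ℝ) + 1) ^ (n + 2)) A := by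
    rw [hA]
    have hfun : (fun j : ℕ => 1 / (2 * (j : ℝ) + 1) ^ (n + 2))
        = fun j : ℕ => 1 / (((2 * j : ℕ) : ℝ) + 1) ^ (n + 2) := by
      funext j
      push_cast
      ring_nf
    rw [← hfun]
    exact hOddSummand.hasSum
  -- Z = A + (1/2^(n+2)) * Z
  have hZeq : Z = A + (1 / 2 ^ (n + 2)) * Z := by
    have h := HasSum.even_add_odd (f := fun k : ℕ => 1 / ((k : ℝ) + 1) ^ (n + 2)) hge hgo
    exact hZsum.hasSum.unique h
  -- η = A - (1/2^(n+2)) * Z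
  have hηeq : η = A - (1 / 2 ^ (n + 2)) * Z := by
    have hfe : HasSum (fun j : ℕ => (-1 : ℝ) ^ (2 * j : ℕ) / (((2 * j : ℕ) : ℝ) + 1) ^ (n + 2))
        A := by
      have hfun : (fun j : ℕ => 1 / (((2 * j : ℕ) : ℝ) + 1) ^ (n + 2))
          = fun j : ℕ => (-1 : ℝ) ^ (2 * j : ℕ) / (((2 * j : ℕ) : ℝ) + 1) ^ (n + 2) := by
        funext j
        rw [Even.neg_one_pow ⟨j, by ring⟩]
      rw [hfun] at hge
      exact hge
    have hfo : HasSum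
        (fun j : ℕ => (-1 : ℝ) ^ (2 * j + 1 : ℕ) / (((2 * j + 1 : ℕ) : ℝ) + 1) ^ (n + 2))
        (-((1 / 2 ^ (n + 2)) * Z)) := by
      have h := hgo.neg
      have hfun : (fun j : ℕ => -(1 / (((2 * j + 1 : ℕ) : ℝ) + 1) ^ (n + 2)))
          = fun j : ℕ => (-1 : ℝ) ^ (2 * j + 1 : ℕ) / (((2 * j + 1 : ℕ) : ℝ) + 1) ^ (n + 2) := by
        funext j
        rw [Odd.neg_one_pow ⟨j, by ring⟩]
        ring
      rw [hfun] at h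
      exact h
    have h := HasSum.even_add_odd
      (f := fun k : ℕ => (-1 : ℝ) ^ k / ((k : ℝ) + 1) ^ (n + 2)) hfe hfo
    rw [hη, h.tsum_eq]
    ring
  have hη2 : η = (1 - 1 / 2 ^ (n + 1)) * Z := by
    have hAval : A = Z - (1 / 2 ^ (n + 2)) * Z := by linarith [hZeq]
    rw [hηeq, hAval]
    have : (2 : ℝ) ^ (n + 2) = 2 * 2 ^ (n + 1) := by ring
    rw [this]
    field_simp
    ring
  constructor
  · rw [hI1, hI2, Nat.factorial_succ]
    have hne : ((n : ℝ) + 1) ≠ 0 := by positivity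
    push_cast
    field_simp
  · -- complex identity
    rw [hI1, hη2]
    have hzeta : riemannZeta ((n : ℂ) + 2) = (Z : ℂ) := by
      have h1 : riemannZeta ((n + 2 : ℕ) : ℂ) = ∑' k : ℕ, 1 / (k : ℂ) ^ (n + 2) :=
        zeta_nat_eq_tsum_of_gt_one (by omega)
      have h2 : (∑' k : ℕ, 1 / (k : ℂ) ^ (n + 2)) = (Z : ℂ) := by
        have hre : (∑' k : ℕ, 1 / (k : ℝ) ^ (n + 2)) = Z := by
          rw [Summable.tsum_eq_zero_add (summable_one_div_nat_pow.2 (by omega))]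
          rw [hZ]
          have h0 : 1 / ((0 : ℕ) : ℝ) ^ (n + 2) = 0 := by
            norm_num
          rw [h0, zero_add]
          exact tsum_congr fun k => by push_cast; ring_nf
        rw [← hre, Complex.ofReal_tsum]
        exact tsum_congr fun k => by push_cast; ring
      rw [show ((n : ℂ) + 2) = ((n + 2 : ℕ) : ℂ) by push_cast; ring, h1, h2]
    rw [hzeta]
    have h2c : (2 : ℂ) ^ (-1 - (n : ℤ)) = 1 / (2 : ℂ) ^ (n + 1) := by
      rw [show (-1 - (n : ℤ)) = -((n + 1 : ℕ) : ℤ) by push_cast; ring,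
        zpow_neg, zpow_natCast, one_div]
    rw [h2c]
    push_cast
    ring
end

section
/- For all natural numbers j, k with 1 ≤ k ≤ j, ∑_{ℓ=k}^{j} (2j-1)! · (2 - 2^{2-2j+2ℓ}) · ζ(2(j-ℓ)) · (-1)^{ℓ+k} · π^{2(ℓ-k)} / ((2ℓ-2k+1)! · (2k-1)!) = δ_{j,k}, where ζ(0) = -1/2 and δ_{j,k} is 1 if j = k and 0 otherwise. (In matrix terms: the lower triangular matrix with entries a_{j,k} = (2j-1)!(2-2^{2-2j+2k})ζ(2j-2k) has inverse with entries b_{j,k} = (-1)^{j+k} π^{2(j-k)} / ((2j-2k+1)!(2k-1)!).) -/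
open Real Polynomial Finset

lemma bern_symm (n : ℕ) : (Polynomial.bernoulli n).comp (1 - Polynomial.X) =
    Polynomial.C ((-1:ℚ)^n) * Polynomial.bernoulli n := by
  induction n with
  | zero => simp
  | succ n ih =>
    have hC : Polynomial.C ((-1:ℚ)^(n+1)) = - Polynomial.C ((-1:ℚ)^n) := by
      rw [pow_succ]; simp
    have hd : Polynomial.derivative ((Polynomial.bernoulli (n+1)).comp (1 - Polynomial.X)
        - Polynomial.C ((-1:ℚ)^(n+1)) * Polynomial.bernoulli (n+1)) = 0 := by
      rw [derivative_sub, Polynomial.derivative_comp, Polynomial.derivative_bernoulli_add_one,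
        derivative_C_mul, Polynomial.derivative_bernoulli_add_one]
      simp only [Polynomial.mul_comp, Polynomial.natCast_comp, Polynomial.add_comp,
        Polynomial.one_comp, derivative_sub, derivative_one, derivative_X, zero_sub, ih, hC]
      ring
    have hp := Polynomial.eq_C_of_derivative_eq_zero hd
    have h1 : ((Polynomial.bernoulli (n+1)).comp (1 - Polynomial.X)
        - Polynomial.C ((-1:ℚ)^(n+1)) * Polynomial.bernoulli (n+1)).eval 1 = 0 := by
      simp [Polynomial.eval_comp, _root_.bernoulli]
    rw [hp, Polynomial.eval_C] at h1
    rw [h1, map_zero, sub_eq_zero] at hp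
    exact hp

lemma bern_eval (N : ℕ) (x : ℚ) : (Polynomial.bernoulli N).eval x =
    ∑ i ∈ range (N+1), _root_.bernoulli i * (N.choose i : ℚ) * x^(N-i) := by
  rw [Polynomial.bernoulli, Polynomial.eval_finset_sum]
  exact Finset.sum_congr rfl fun i _ => by rw [Polynomial.eval_monomial]

lemma bern_half {N : ℕ} (hN : Odd N) : (Polynomial.bernoulli N).eval (1/2 : ℚ) = 0 := by
  have h := congrArg (Polynomial.eval (1/2 : ℚ)) (bern_symm N)
  rw [Polynomial.eval_comp, Polynomial.eval_mul, Polynomial.eval_C, hN.neg_one_pow] at h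
  simp only [Polynomial.eval_sub, Polynomial.eval_one, Polynomial.eval_X] at h
  norm_num at h
  linarith

lemma sumF {N : ℕ} (hN : Odd N) :
    ∑ i ∈ range (N+1), (N.choose i : ℚ) * _root_.bernoulli i * 2^i = 0 := by
  have h := bern_half hN
  rw [bern_eval] at h
  have h2 := congrArg (fun y => (2:ℚ)^N * y) h
  simp only [Finset.mul_sum, mul_zero] at h2
  rw [← h2]
  refine Finset.sum_congr rfl fun i hi => ?_
  have hiN : i ≤ N := by simpa [Nat.lt_succ_iff] using hi
  have : (2:ℚ)^N * (1/2:ℚ)^(N-i) = 2^i := by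
    rw [div_pow, one_pow, mul_one_div, div_eq_iff (by positivity : (2:ℚ)^(N-i) ≠ 0), ← pow_add]
    congr 1; omega
  calc (N.choose i : ℚ) * _root_.bernoulli i * 2^i
      = _root_.bernoulli i * (N.choose i : ℚ) * ((2:ℚ)^N * (1/2:ℚ)^(N-i)) := by rw [this]; ring
    _ = (2:ℚ)^N * (_root_.bernoulli i * (N.choose i : ℚ) * (1/2:ℚ)^(N-i)) := by ring

lemma sumG {N : ℕ} (hN : Odd N) (h1 : 1 < N) :
    ∑ i ∈ range (N+1), (N.choose i : ℚ) * _root_.bernoulli i = 0 := by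
  have h := Polynomial.bernoulli_eval_one N
  rw [bern_eval, bernoulli'_eq_zero_of_odd hN h1] at h
  rw [← h]
  exact Finset.sum_congr rfl fun i hi => by rw [one_pow]; ring

lemma sum_range_two_mul (M : ℕ) (f : ℕ → ℚ) :
    ∑ k ∈ range (2*M), f k = ∑ i ∈ range M, (f (2*i) + f (2*i+1)) := by
  induction M with
  | zero => simp
  | succ M ih =>
    rw [show 2*(M+1) = 2*M+1+1 by ring, Finset.sum_range_succ, Finset.sum_range_succ,
      Finset.sum_range_succ, ih, add_assoc]

lemma bern_odd {i : ℕ} (hi : 1 ≤ i) : _root_.bernoulli (2*i+1) = 0 := by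
  rw [_root_.bernoulli, bernoulli'_eq_zero_of_odd ⟨i, by ring⟩ (by omega), mul_zero]

lemma key (m : ℕ) (hm : 1 ≤ m) :
    ∑ n ∈ range (m+1), ((2*m+1).choose (2*n) : ℚ) * (4^n - 2) * _root_.bernoulli (2*n) = 0 := by
  have hodd : Odd (2*m+1) := ⟨m, by ring⟩
  have hT : ∑ k ∈ range (2*m+1+1), ((2*m+1).choose k : ℚ) * (2^k - 2) * _root_.bernoulli k = 0 := by
    have := sumF hodd
    have h2 := sumG hodd (by omega)
    calc ∑ k ∈ range (2*m+1+1), ((2*m+1).choose k : ℚ) * (2^k - 2) * _root_.bernoulli k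
        = ∑ k ∈ range (2*m+1+1), (((2*m+1).choose k : ℚ) * _root_.bernoulli k * 2^k
            - 2 * (((2*m+1).choose k : ℚ) * _root_.bernoulli k)) :=
          Finset.sum_congr rfl fun k _ => by ring
      _ = 0 := by rw [Finset.sum_sub_distrib, ← Finset.mul_sum, this, h2]; ring
  rw [show 2*m+1+1 = 2*(m+1) by ring, sum_range_two_mul] at hT
  rw [← hT]
  refine Finset.sum_congr rfl fun n _ => ?_
  have hz : ((2*m+1).choose (2*n+1) : ℚ) * (2^(2*n+1) - 2) * _root_.bernoulli (2*n+1) = 0 := by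
    rcases Nat.eq_zero_or_pos n with h | h
    · subst h; norm_num
    · rw [bern_odd h, mul_zero]
  rw [hz, add_zero, show (2:ℚ)^(2*n) = 4^n by rw [pow_mul]; norm_num]

lemma Rm_eq (m : ℕ) (hm : 1 ≤ m) :
    ∑ n ∈ range (m+1), (4^n - 2) * _root_.bernoulli (2*n) /
      (((2*n).factorial : ℚ) * ((2*(m-n)+1).factorial : ℚ)) = 0 := by
  have hfac : ((2*m+1).factorial : ℚ) ≠ 0 := Nat.cast_ne_zero.mpr (Nat.factorial_ne_zero _)
  have : ∀ n ∈ range (m+1), (4^n - 2) * _root_.bernoulli (2*n) /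
      (((2*n).factorial : ℚ) * ((2*(m-n)+1).factorial : ℚ))
      = ((2*m+1).choose (2*n) : ℚ) * (4^n - 2) * _root_.bernoulli (2*n) / ((2*m+1).factorial : ℚ) := by
    intro n hn
    have hnm : n ≤ m := by simpa [Nat.lt_succ_iff] using hn
    have hle : 2*n ≤ 2*m+1 := by omega
    rw [Nat.cast_choose ℚ hle, show 2*m+1 - 2*n = 2*(m-n)+1 by omega]
    have h1 : ((2*n).factorial : ℚ) ≠ 0 := Nat.cast_ne_zero.mpr (Nat.factorial_ne_zero _)
    have h2 : ((2*(m-n)+1).factorial : ℚ) ≠ 0 := Nat.cast_ne_zero.mpr (Nat.factorial_ne_zero _)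
    field_simp
  rw [Finset.sum_congr rfl this, ← Finset.sum_div, ← Finset.sum_congr rfl (fun n _ => rfl), key m hm, zero_div]

lemma zeta_term (n : ℕ) : (2 - (2:ℂ)^((2:ℤ) - 2*(n:ℤ))) * riemannZeta (2*(n:ℂ)) =
    (-1)^(n+1) * (π : ℂ)^(2*n) *
      (((4^n - 2) * _root_.bernoulli (2*n) / ((2*n).factorial : ℚ) : ℚ) : ℂ) := by
  rcases Nat.eq_zero_or_pos n with h | h
  · subst h
    simp only [Nat.cast_zero, mul_zero, riemannZeta_zero]
    norm_num
  · have hn : n ≠ 0 := by omega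
    rw [riemannZeta_two_mul_nat hn]
    have hz : (2:ℂ)^((2:ℤ) - 2*(n:ℤ)) = 2^2 / 2^(2*n) := by
      rw [zpow_sub₀ (by norm_num : (2:ℂ) ≠ 0)]
      norm_num
      rw [show ((2:ℤ)*(n:ℤ)) = ((2*n : ℕ) : ℤ) by push_cast; ring, zpow_natCast]
    rw [hz]
    have h1 : (2:ℂ)^(2*n-1) = 2^(2*n)/2 := by
      rw [eq_div_iff (by norm_num : (2:ℂ) ≠ 0), ← pow_succ]
      congr 1; omega
    have h2 : ((2*n).factorial : ℂ) ≠ 0 := Nat.cast_ne_zero.mpr (Nat.factorial_ne_zero _)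
    have h3 : (2:ℂ)^(2*n) ≠ 0 := pow_ne_zero _ (by norm_num)
    have h4 : ((4:ℂ))^n = 2^(2*n) := by rw [pow_mul]; norm_num
    push_cast
    rw [h1, h4]
    field_simp


/-- For all natural numbers `j, k` with `1 ≤ k ≤ j`,
`∑_{ℓ=k}^j (2j-1)!·(2 - 2^{2-2j+2ℓ})·ζ(2(j-ℓ))·(-1)^{ℓ+k}·π^{2(ℓ-k)}/((2ℓ-2k+1)!·(2k-1)!)
  = δ_{j,k}`, where `ζ(0) = -1/2`.  In matrix terms, the lower triangular matrix with
entries `a_{j,k} = (2j-1)!(2-2^{2-2j+2k})ζ(2j-2k)` has inverse with entries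
`b_{j,k} = (-1)^{j+k}π^{2(j-k)}/((2j-2k+1)!(2k-1)!)`. -/
theorem matrix_inverse_entries (j k : ℕ) (hk : 1 ≤ k) (hkj : k ≤ j) :
    ∑ ℓ ∈ Finset.Icc k j,
        (Nat.factorial (2 * j - 1) : ℂ) * (2 - (2 : ℂ) ^ ((2 : ℤ) - 2 * j + 2 * ℓ)) *
          riemannZeta (2 * (j - ℓ)) *
          ((-1) ^ (ℓ + k) * (π : ℂ) ^ (2 * (ℓ - k)) /
            ((Nat.factorial (2 * ℓ - 2 * k + 1) : ℂ) * (Nat.factorial (2 * k - 1) : ℂ))) =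
      if j = k then 1 else 0 := by
  obtain ⟨m, rfl⟩ : ∃ m, j = k + m := ⟨j - k, by omega⟩
  rw [show Finset.Icc k (k+m) = Finset.Ico k (k+m+1) by rw [Finset.Ico_add_one_right_eq_Icc],
    Finset.sum_Ico_eq_sum_range, show k + m + 1 - k = m + 1 by omega]
  have hfk : ((2*k-1).factorial : ℂ) ≠ 0 := Nat.cast_ne_zero.mpr (Nat.factorial_ne_zero _)
  have hq : ∀ i ∈ range (m+1),
      (Nat.factorial (2 * (k+m) - 1) : ℂ) *
        (2 - (2 : ℂ) ^ ((2 : ℤ) - 2 * ((k+m : ℕ) : ℤ) + 2 * ((k+i : ℕ) : ℤ))) *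
        riemannZeta (2 * (((k+m : ℕ) : ℂ) - ((k+i : ℕ) : ℂ))) *
        ((-1) ^ ((k+i) + k) * (π : ℂ) ^ (2 * ((k+i) - k)) /
          ((Nat.factorial (2 * (k+i) - 2 * k + 1) : ℂ) * (Nat.factorial (2 * k - 1) : ℂ)))
      = ((Nat.factorial (2*(k+m)-1) : ℂ) * (-1)^(m+1) * (π:ℂ)^(2*m) / (Nat.factorial (2*k-1) : ℂ))
        * (((4^(m-i) - 2) * _root_.bernoulli (2*(m-i)) /
            (((2*(m-i)).factorial : ℚ) * ((2*i+1).factorial : ℚ)) : ℚ) : ℂ) := by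
    intro i hi
    have him : i ≤ m := by simpa [Nat.lt_succ_iff] using hi
    obtain ⟨n, rfl⟩ : ∃ n, m = i + n := ⟨m - i, by omega⟩
    rw [show (((k+(i+n) : ℕ)) : ℂ) - ((k+i : ℕ) : ℂ) = (n : ℂ) by push_cast; ring,
      show 2*(k+i) - 2*k + 1 = 2*i+1 by omega,
      show (k+i) - k = i by omega,
      show (i+n) - i = n by omega,
      show (2 : ℤ) - 2 * ((k + (i+n) : ℕ) : ℤ) + 2 * ((k + i : ℕ) : ℤ) = 2 - 2*(n:ℤ) by
        push_cast; ring,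
      show (k+i)+k = i+2*k by ring, pow_add ((-1:ℂ)) i (2*k), pow_mul, neg_one_sq, one_pow,
      mul_one, mul_assoc ((Nat.factorial (2 * (k+(i+n)) - 1) : ℂ)), zeta_term n]
    have h1 : ((2*n).factorial : ℂ) ≠ 0 := Nat.cast_ne_zero.mpr (Nat.factorial_ne_zero _)
    have h2 : ((2*i+1).factorial : ℂ) ≠ 0 := Nat.cast_ne_zero.mpr (Nat.factorial_ne_zero _)
    push_cast
    field_simp
    ring
  rw [Finset.sum_congr rfl hq, ← Finset.mul_sum, ← Rat.cast_sum]
  rcases Nat.eq_zero_or_pos m with hm | hm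
  · subst hm
    rw [Finset.sum_range_one]
    norm_num [Nat.factorial]
    field_simp
  · have h0 : ∑ i ∈ range (m+1), ((4^(m-i) - 2) * _root_.bernoulli (2*(m-i)) /
        (((2*(m-i)).factorial : ℚ) * ((2*i+1).factorial : ℚ))) = 0 := by
      have hrefl := Finset.sum_range_reflect (fun n => (4^n - 2) * _root_.bernoulli (2*n) /
        (((2*n).factorial : ℚ) * ((2*(m-n)+1).factorial : ℚ))) (m+1)
      refine (Finset.sum_congr rfl fun i hi => ?_).trans (hrefl.trans (Rm_eq m hm))
      have him : i ≤ m := by simpa [Nat.lt_succ_iff] using hi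
      have e1 : m + 1 - 1 - i = m - i := by omega
      have e2 : m - (m - i) = i := by omega
      rw [e1]
      simp only [e2]
    rw [h0]
    have : k + m ≠ k := by omega
    simp [this]
    omega
end
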